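/- Let q ≥ 2. Then (q²+q+1)·sqrt(q) / (q + sqrt(q) + 1) + q + 1 is strictly greater than (sqrt(q) + sqrt(q + 4(q+1)(q+sqrt(q)+1)/(q²+q+1))) / (2(q+sqrt(q)+1)/(q²+q+1)); that is, the loop-adjusted ratio bound for ER(q) is strictly better than the loopless ratio bound plus q+1. -/
import Mathlib


/-- For real `q ≥ 2`, the loop-aware bound (Abound1ERq) for `ER(q)` is strictly better
than the loopless ratio bound plus `q+1` (ratioboundERq). -/
theorem stmt19 (q : ℝ) (hq : 2 ≤ q) :
    (Real.sqrt q + Real.sqrt (q + 4 * (q + 1) * (q + Real.sqrt q + 1)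
        / (q ^ 2 + q + 1)))
      / (2 * (q + Real.sqrt q + 1) / (q ^ 2 + q + 1))
    < (q ^ 2 + q + 1) * Real.sqrt q / (q + Real.sqrt q + 1) + q + 1 := by
  have hq0 : (0:ℝ) ≤ q := by linarith
  set s := Real.sqrt q with hs
  have hs2 : s ^ 2 = q := Real.sq_sqrt hq0
  have hs1 : 1 < s := by
    have : Real.sqrt 1 < Real.sqrt q := Real.sqrt_lt_sqrt (by norm_num) (by linarith)
    simpa using this
  have hN : (0:ℝ) < q ^ 2 + q + 1 := by nlinarith
  have hD : (0:ℝ) < q + s + 1 := by nlinarith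
  have hRlt : Real.sqrt (q + 4 * (q + 1) * (q + s + 1) / (q ^ 2 + q + 1))
      < s + 2 * (q + s + 1) * (q + 1) / (q ^ 2 + q + 1) := by
    rw [Real.sqrt_lt' (by positivity)]
    have h1 : (0:ℝ) < (q + s + 1) * (q + 1) / (q ^ 2 + q + 1) := by positivity
    have expand : (s + 2 * (q + s + 1) * (q + 1) / (q ^ 2 + q + 1)) ^ 2
        = s ^ 2 + 4 * s * ((q + s + 1) * (q + 1) / (q ^ 2 + q + 1))
          + 4 * ((q + s + 1) * (q + 1) / (q ^ 2 + q + 1)) ^ 2 := by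
      ring
    rw [expand, hs2]
    have h2 : 4 * (q + 1) * (q + s + 1) / (q ^ 2 + q + 1)
        = 4 * ((q + s + 1) * (q + 1) / (q ^ 2 + q + 1)) := by ring
    rw [h2]
    nlinarith [h1, hs1, sq_nonneg ((q + s + 1) * (q + 1) / (q ^ 2 + q + 1))]
  have hpos : (0:ℝ) < 2 * (q + s + 1) / (q ^ 2 + q + 1) := by positivity
  rw [div_lt_iff₀ hpos]
  have key : ((q ^ 2 + q + 1) * s / (q + s + 1) + q + 1) * (2 * (q + s + 1) / (q ^ 2 + q + 1))
      = 2 * s + 2 * (q + s + 1) * (q + 1) / (q ^ 2 + q + 1) := by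
    field_simp
    ring
  rw [key]
  linarith [hRlt]
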